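/- Let f : ℝⁿ → ℝ be twice continuously differentiable with ∇²f Lipschitz continuous with constant L_H > 0, let ε_H > 0, θ ∈ (0,1), and η > 0. Let x be a point and d ≠ 0 a direction satisfying dᵀ∇f(x) ≤ 0 and dᵀ∇²f(x)d = −‖d‖³ ≤ −ε_H‖d‖². Then the smallest nonnegative integer j such that f(x + θʲd) < f(x) − (η/6)θ^{3j}‖d‖³ exists and satisfies j ≤ j_nc + 1, where j_nc = [log_θ(3/(L_H+η))]_+; moreover, with α = θʲ, f(x) − f(x + αd) ≥ c_nc·ε_H³, where c_nc = (η/6)·min{1, 27θ³/(L_H+η)³}. -/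

import Mathlib

open RealInnerProductSpace

set_option maxHeartbeats 1000000 in
theorem stmt16
    {n : ℕ} (f : EuclideanSpace ℝ (Fin n) → ℝ)
    (L_H : ℝ) (hLH : 0 < L_H)
    (hf : ContDiff ℝ 2 f)
    (hLip : LipschitzWith (Real.toNNReal L_H)
      (fun z : EuclideanSpace ℝ (Fin n) => fderiv ℝ (gradient f) z))
    (ε_H θ η : ℝ)
    (hεH : 0 < ε_H) (hθ : θ ∈ Set.Ioo (0:ℝ) 1) (hη : 0 < η)
    (x d : EuclideanSpace ℝ (Fin n)) (hd : d ≠ 0)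
    (hdg : ⟪d, gradient f x⟫ ≤ 0)
    (hcurv : ⟪d, fderiv ℝ (gradient f) x d⟫ = -‖d‖^3)
    (hcurv2 : -‖d‖^3 ≤ -ε_H * ‖d‖^2) :
    ∃ j : ℕ,
      f (x + θ^j • d) < f x - η/6 * θ^(3*j) * ‖d‖^3 ∧
      (∀ i < j, ¬ (f (x + θ^i • d) < f x - η/6 * θ^(3*i) * ‖d‖^3)) ∧
      (j : ℝ) ≤ max (Real.logb θ (3/(L_H+η))) 0 + 1 ∧
      f x - f (x + θ^j • d) ≥
        η/6 * min 1 (27*θ^3/(L_H+η)^3) * ε_H^3 := by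
  classical
  obtain ⟨hθ0, hθ1⟩ := hθ
  have hdpos : 0 < ‖d‖ := norm_pos_iff.mpr hd
  set D : ℝ := ‖d‖^3 with hD
  have hDpos : 0 < D := by positivity
  set gd : ℝ := ⟪d, gradient f x⟫ with hgd
  set q : ℝ := ⟪d, fderiv ℝ (gradient f) x d⟫ with hq
  -- regularity of the gradient
  have hg1 : ContDiff ℝ 1 (gradient f) := by
    have : gradient f = fun z => (InnerProductSpace.toDual ℝ _).symm (fderiv ℝ f z) := rfl
    rw [this]
    exact (InnerProductSpace.toDual ℝ _).symm.contDiff.comp (hf.fderiv_right (by norm_num))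
  have hgdiff : Differentiable ℝ (gradient f) := hg1.differentiable one_ne_zero
  -- curve derivative
  have hc : ∀ t : ℝ, HasDerivAt (fun s : ℝ => x + s • d) d t := fun t => by
    simpa using ((hasDerivAt_id t).smul_const d).const_add x
  -- first derivative of φ
  have hφ : ∀ t : ℝ, HasDerivAt (fun s : ℝ => f (x + s • d))
      ⟪d, gradient f (x + t • d)⟫ t := by
    intro t
    have hF : HasFDerivAt f (fderiv ℝ f (x + t • d)) (x + t • d) :=
      (hf.differentiable (by norm_num)).differentiableAt.hasFDerivAt
    have := hF.comp_hasDerivAt t (hc t)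
    refine this.congr_deriv ?_
    rw [real_inner_comm, gradient, ← InnerProductSpace.toDual_apply_apply,
      LinearIsometryEquiv.apply_symm_apply]
  -- derivative of φ₁
  have hφ₁ : ∀ t : ℝ, HasDerivAt (fun s : ℝ => ⟪d, gradient f (x + s • d)⟫)
      ⟪d, fderiv ℝ (gradient f) (x + t • d) d⟫ t := by
    intro t
    have hG : HasFDerivAt (gradient f) (fderiv ℝ (gradient f) (x + t • d)) (x + t • d) :=
      (hgdiff (x + t • d)).hasFDerivAt
    have := ((innerSL ℝ d).hasFDerivAt.comp (x + t • d) hG).comp_hasDerivAt t (hc t)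
    exact this
  -- Lipschitz bound on the second derivative
  have hψ : ∀ t : ℝ, 0 ≤ t →
      ⟪d, fderiv ℝ (gradient f) (x + t • d) d⟫ ≤ q + L_H * t * D := by
    intro t ht
    have h1 : ⟪d, fderiv ℝ (gradient f) (x + t • d) d⟫ - q
        = ⟪d, (fderiv ℝ (gradient f) (x + t • d) - fderiv ℝ (gradient f) x) d⟫ := by
      rw [hq]
      simp [inner_sub_right]
    have h2 : ⟪d, (fderiv ℝ (gradient f) (x + t • d) - fderiv ℝ (gradient f) x) d⟫
        ≤ ‖d‖ * ‖(fderiv ℝ (gradient f) (x + t • d) - fderiv ℝ (gradient f) x) d‖ :=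
      real_inner_le_norm _ _
    have h3 : ‖(fderiv ℝ (gradient f) (x + t • d) - fderiv ℝ (gradient f) x) d‖
        ≤ ‖fderiv ℝ (gradient f) (x + t • d) - fderiv ℝ (gradient f) x‖ * ‖d‖ :=
      (fderiv ℝ (gradient f) (x + t • d) - fderiv ℝ (gradient f) x).le_opNorm d
    have h4 : ‖fderiv ℝ (gradient f) (x + t • d) - fderiv ℝ (gradient f) x‖
        ≤ L_H * (t * ‖d‖) := by
      have := hLip.dist_le_mul (x + t • d) x
      rw [dist_eq_norm, dist_eq_norm] at this
      simp only [add_sub_cancel_left] at this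
      calc ‖fderiv ℝ (gradient f) (x + t • d) - fderiv ℝ (gradient f) x‖
          ≤ (Real.toNNReal L_H : ℝ) * ‖t • d‖ := this
        _ = L_H * (t * ‖d‖) := by
            rw [Real.coe_toNNReal L_H hLH.le, norm_smul, Real.norm_eq_abs, abs_of_nonneg ht]
    have h5 : ‖d‖ * ‖(fderiv ℝ (gradient f) (x + t • d) - fderiv ℝ (gradient f) x) d‖
        ≤ L_H * t * D := by
      calc ‖d‖ * ‖(fderiv ℝ (gradient f) (x + t • d) - fderiv ℝ (gradient f) x) d‖
          ≤ ‖d‖ * (‖fderiv ℝ (gradient f) (x + t • d) - fderiv ℝ (gradient f) x‖ * ‖d‖) :=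
            mul_le_mul_of_nonneg_left h3 (norm_nonneg d)
        _ ≤ ‖d‖ * ((L_H * (t * ‖d‖)) * ‖d‖) :=
            mul_le_mul_of_nonneg_left
              (mul_le_mul_of_nonneg_right h4 (norm_nonneg d)) (norm_nonneg d)
        _ = L_H * t * D := by rw [hD]; ring
    linarith
  -- first antitone step
  set A : ℝ → ℝ := fun t => ⟪d, gradient f (x + t • d)⟫ - gd - t * q - L_H * t^2 * D / 2
    with hA
  have hA' : ∀ t : ℝ, HasDerivAt A
      (⟪d, fderiv ℝ (gradient f) (x + t • d) d⟫ - (q + L_H * t * D)) t := by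
    intro t
    have h2 : HasDerivAt (fun s : ℝ => gd + s * q + L_H * s^2 * D / 2)
        (q + L_H * t * D) t := by
      have := (((hasDerivAt_const t gd).add ((hasDerivAt_id t).mul_const q)).add
        ((((hasDerivAt_pow 2 t).const_mul L_H).mul_const D).div_const 2))
      exact this.congr_deriv (by ring)
    have := (hφ₁ t).sub h2
    refine this.congr_of_eventuallyEq (Filter.Eventually.of_forall fun s => ?_)
    rw [hA]; simp only [Pi.sub_apply]; ring
  have hAle : ∀ t : ℝ, 0 ≤ t → A t ≤ 0 := by
    intro t ht
    have hanti : AntitoneOn A (Set.Ici (0:ℝ)) := by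
      apply antitoneOn_of_deriv_nonpos (convex_Ici 0)
      · exact fun s _ => (hA' s).continuousAt.continuousWithinAt
      · exact fun s _ => (hA' s).differentiableAt.differentiableWithinAt
      · intro s hs
        rw [interior_Ici] at hs
        rw [(hA' s).deriv]
        have := hψ s (le_of_lt hs)
        linarith
    have hA0 : A 0 = 0 := by simp [hA, hgd]
    have := hanti (Set.self_mem_Ici) (Set.mem_Ici.mpr ht) ht
    rw [hA0] at this
    exact this
  -- second antitone step
  set B : ℝ → ℝ := fun t => f (x + t • d) - f x - t * gd - t^2 / 2 * q - L_H * t^3 * D / 6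
    with hB
  have hB' : ∀ t : ℝ, HasDerivAt B (A t) t := by
    intro t
    have h2 : HasDerivAt (fun s : ℝ => f x + s * gd + s^2 / 2 * q + L_H * s^3 * D / 6)
        (gd + t * q + L_H * t^2 * D / 2) t := by
      have := (((hasDerivAt_const t (f x)).add ((hasDerivAt_id t).mul_const gd)).add
        (((hasDerivAt_pow 2 t).div_const 2).mul_const q)).add
        ((((hasDerivAt_pow 3 t).const_mul L_H).mul_const D).div_const 6)
      exact this.congr_deriv (by ring)
    have := (hφ t).sub h2
    refine (this.congr_deriv (by rw [hA]; ring)).congr_of_eventuallyEq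
      (Filter.Eventually.of_forall fun s => ?_)
    rw [hB]; simp only [Pi.sub_apply]; ring
  have hBle : ∀ t : ℝ, 0 ≤ t → B t ≤ 0 := by
    intro t ht
    have hanti : AntitoneOn B (Set.Ici (0:ℝ)) := by
      apply antitoneOn_of_deriv_nonpos (convex_Ici 0)
      · exact fun s _ => (hB' s).continuousAt.continuousWithinAt
      · exact fun s _ => (hB' s).differentiableAt.differentiableWithinAt
      · intro s hs
        rw [interior_Ici] at hs
        rw [(hB' s).deriv]
        exact hAle s (le_of_lt hs)
    have hB0 : B 0 = 0 := by simp [hB]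
    have := hanti (Set.self_mem_Ici) (Set.mem_Ici.mpr ht) ht
    rw [hB0] at this
    exact this
  -- key Taylor bound
  have hkey : ∀ α : ℝ, 0 ≤ α →
      f (x + α • d) ≤ f x + α * gd + α^2 / 2 * q + L_H * α^3 * D / 6 := by
    intro α hα
    have := hBle α hα
    rw [hB] at this
    linarith
  -- success criterion
  have hsucc : ∀ α : ℝ, 0 < α → α * (L_H + η) < 3 →
      f (x + α • d) < f x - η/6 * α^3 * D := by
    intro α hα hα3
    have hk := hkey α hα.le
    rw [hcurv] at hk
    have hgd0 : α * gd ≤ 0 := mul_nonpos_of_nonneg_of_nonpos hα.le hdg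
    have hsq : 0 < α^2 := by positivity
    have h5 : α^2 * (α * (L_H + η)) < α^2 * 3 := by
      exact mul_lt_mul_of_pos_left hα3 hsq
    nlinarith [mul_pos (mul_pos hsq hα) hDpos, mul_lt_mul_of_pos_right h5 (by positivity : (0:ℝ) < D / 6)]
  have hLηpos : 0 < L_H + η := by linarith
  -- existence of a successful j
  have hPex : ∃ j : ℕ, f (x + θ^j • d) < f x - η/6 * θ^(3*j) * D := by
    obtain ⟨j, hj⟩ := exists_pow_lt_of_lt_one (by positivity : (0:ℝ) < 3/(L_H+η)) hθ1
    refine ⟨j, ?_⟩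
    have h1 : θ^j * (L_H + η) < 3 := by
      rw [lt_div_iff₀ hLηpos] at hj
      linarith [hj]
    have := hsucc (θ^j) (pow_pos hθ0 j) h1
    rw [mul_comm 3 j, pow_mul]
    exact this
  set j := Nat.find hPex with hjdef
  have hPj : f (x + θ^j • d) < f x - η/6 * θ^(3*j) * D := Nat.find_spec hPex
  refine ⟨j, hPj, fun i hi => Nat.find_min hPex hi, ?_, ?_⟩
  · -- bound on j
    rcases Nat.eq_zero_or_pos j with hj0 | hjpos
    · rw [hj0]
      have := le_max_right (Real.logb θ (3/(L_H+η))) 0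
      push_cast
      linarith
    · obtain ⟨k, hk⟩ : ∃ k, j = k + 1 := ⟨j - 1, (Nat.succ_pred_eq_of_pos hjpos).symm⟩
      have hnk : ¬ (f (x + θ^k • d) < f x - η/6 * θ^(3*k) * D) := by
        refine Nat.find_min hPex ?_
        omega
      have hge : 3/(L_H+η) ≤ θ^k := by
        by_contra hlt
        push_neg at hlt
        apply hnk
        have h1 : θ^k * (L_H + η) < 3 := by
          rw [lt_div_iff₀ hLηpos] at hlt; linarith
        have := hsucc (θ^k) (pow_pos hθ0 k) h1
        rw [mul_comm 3 k, pow_mul]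
        exact this
      have hlogθ : Real.log θ < 0 := Real.log_neg hθ0 hθ1
      have hklog : (k : ℝ) ≤ Real.logb θ (3/(L_H+η)) := by
        have hlog : Real.log (3/(L_H+η)) ≤ Real.log (θ^k) :=
          Real.log_le_log (by positivity) hge
        rw [Real.log_pow] at hlog
        rw [Real.logb, le_div_iff_of_neg hlogθ]
        exact_mod_cast hlog
      have := le_max_left (Real.logb θ (3/(L_H+η))) 0
      rw [hk]
      push_cast
      linarith
  · -- decrease bound
    have hεd : ε_H ≤ ‖d‖ := by
      nlinarith [hcurv2, hD, mul_pos hdpos hdpos]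
    have hε3 : ε_H^3 ≤ D := by
      rw [hD]
      exact pow_le_pow_left₀ hεH.le hεd 3
    have hmin : min 1 (27*θ^3/(L_H+η)^3) ≤ θ^(3*j) := by
      rw [mul_comm 3 j, pow_mul]
      rcases Nat.eq_zero_or_pos j with hj0 | hjpos
      · rw [hj0]
        simpa using min_le_left (1:ℝ) (27*θ^3/(L_H+η)^3)
      · obtain ⟨k, hk⟩ : ∃ k, j = k + 1 := ⟨j - 1, (Nat.succ_pred_eq_of_pos hjpos).symm⟩
        have hnk : ¬ (f (x + θ^k • d) < f x - η/6 * θ^(3*k) * D) := by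
          refine Nat.find_min hPex ?_
          omega
        have hge : 3/(L_H+η) ≤ θ^k := by
          by_contra hlt
          push_neg at hlt
          apply hnk
          have h1 : θ^k * (L_H + η) < 3 := by
            rw [lt_div_iff₀ hLηpos] at hlt; linarith
          have := hsucc (θ^k) (pow_pos hθ0 k) h1
          rw [mul_comm 3 k, pow_mul]
          exact this
        have h1 : θ * (3/(L_H+η)) ≤ θ^j := by
          rw [hk, pow_succ]
          calc θ * (3/(L_H+η)) = 3/(L_H+η) * θ := by ring
            _ ≤ θ^k * θ := mul_le_mul_of_nonneg_right hge hθ0.le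
        have h2 : (θ * (3/(L_H+η)))^3 ≤ (θ^j)^3 :=
          pow_le_pow_left₀ (by positivity) h1 3
        have h3 : (θ * (3/(L_H+η)))^3 = 27*θ^3/(L_H+η)^3 := by
          field_simp
          ring
        calc min 1 (27*θ^3/(L_H+η)^3) ≤ 27*θ^3/(L_H+η)^3 := min_le_right _ _
          _ = (θ * (3/(L_H+η)))^3 := h3.symm
          _ ≤ (θ^j)^3 := h2
    have hprod : η/6 * min 1 (27*θ^3/(L_H+η)^3) * ε_H^3 ≤ η/6 * θ^(3*j) * D := by
      have hm0 : (0:ℝ) ≤ min 1 (27*θ^3/(L_H+η)^3) := le_min (by norm_num) (by positivity)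
      have := mul_le_mul hmin hε3 (by positivity) (by positivity : (0:ℝ) ≤ θ^(3*j))
      nlinarith [hη]
    linarith
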